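/- Let α ≥ 1 be a countable ordinal and U an update procedure of ordinal α. Then the learning process generated by U terminates: there exists k ∈ ℕ such that U(U^(k)) = ∅; in particular U^(k) is a finite zero of U (Termination of Learning Processes). -/

import Mathlib

/-- Transfinite sequences of functions are modeled as functions on all ordinals;
an update procedure of ordinal `α` only depends on (and only updates) the
entries with index below `α`. -/
abbrev OSeq := Ordinal → ℕ → ℕ

/-- `U` is an update procedure of ordinal `α`. -/
def IsUpdateProc (α : Ordinal) (U : OSeq → Option (Ordinal × ℕ × ℕ)) : Prop :=
  (∀ f : OSeq, ∃ A : Finset (Ordinal × ℕ), (∀ p ∈ A, p.1 < α) ∧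
      ∀ g : OSeq, (∀ p ∈ A, g p.1 p.2 = f p.1 p.2) → U g = U f) ∧
  (∀ (f : OSeq) (β : Ordinal) (n m : ℕ), U f = some (β, n, m) → β < α) ∧
  (∀ (f g : OSeq) (β : Ordinal) (n m i j : ℕ),
      (∀ γ, γ < β → f γ = g γ) →
      U f = some (β, n, m) → g β n = m → U g = some (β, i, j) → i ≠ n)

/-- A sequence is finite (below `α`) if it has nonzero values in only
finitely many places. -/
def OFinite (α : Ordinal) (f : OSeq) : Prop :=
  Set.Finite {p : Ordinal × ℕ | p.1 < α ∧ f p.1 p.2 ≠ 0}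

/-- Controlled update `f ⊕ u`: update the `γ`-th function at `n` to value `m`
and erase (reset to `0`) everything of higher index. -/
noncomputable def oplus (f : OSeq) : Option (Ordinal × ℕ × ℕ) → OSeq
  | none => f
  | some (γ, n, m) => fun β x =>
      if β < γ then f β x
      else if β = γ then (if x = n then m else f β x)
      else 0

/-- The learning process generated by `U`:
`U^(0)` is the constantly `0` sequence and `U^(i+1) = U^(i) ⊕ U(U^(i))`. -/
noncomputable def learnProc (U : OSeq → Option (Ordinal × ℕ × ℕ)) : ℕ → OSeq
  | 0 => fun _ _ => 0
  | i + 1 => oplus (learnProc U i) (U (learnProc U i))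

open scoped Classical

namespace LPTerm

universe u

noncomputable def runP (U : OSeq → Option (Ordinal × ℕ × ℕ)) (x : OSeq) : ℕ → OSeq
  | 0 => x
  | t + 1 => oplus (runP U x t) (U (runP U x t))

variable {U : OSeq.{u} → Option (Ordinal.{u} × ℕ × ℕ)} {α : Ordinal.{u}}

lemma runP_succ (x : OSeq) (t : ℕ) :
    runP U x (t + 1) = oplus (runP U x t) (U (runP U x t)) := rfl

lemma learnProc_eq_runP (U : OSeq → Option (Ordinal × ℕ × ℕ)) :
    ∀ k, learnProc U k = runP U (fun _ _ => 0) k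
  | 0 => rfl
  | k + 1 => by
      show oplus (learnProc U k) (U (learnProc U k)) = _
      rw [learnProc_eq_runP U k]
      rfl

lemma oplus_val (f : OSeq) (γ : Ordinal) (n m : ℕ) (β : Ordinal) (x : ℕ) :
    oplus f (some (γ, n, m)) β x
      = if β < γ then f β x else if β = γ then (if x = n then m else f β x) else 0 := rfl

lemma oplus_congr_at (f f' : OSeq) (u : Option (Ordinal × ℕ × ℕ)) (γ : Ordinal) (n : ℕ)
    (h : f γ n = f' γ n) : oplus f u γ n = oplus f' u γ n := by
  rcases u with _ | ⟨β, p, m⟩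
  · exact h
  · simp only [oplus_val, h]

lemma runP_step_eq (x : OSeq) (t : ℕ) (γ : Ordinal) (n : ℕ)
    (h : ∀ β n' m, U (runP U x t) = some (β, n', m) → γ < β ∨ (γ = β ∧ n' ≠ n)) :
    runP U x (t + 1) γ n = runP U x t γ n := by
  rw [runP_succ]
  rcases hu : U (runP U x t) with _ | ⟨β, n', m⟩
  · rfl
  · rcases h β n' m hu with hb | ⟨rfl, hn⟩
    · rw [oplus_val, if_pos hb]
    · rw [oplus_val, if_neg (lt_irrefl _), if_pos rfl, if_neg (fun hh : n = n' => hn hh.symm)]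

lemma runP_const (x : OSeq) (γ : Ordinal) (n : ℕ) (s e : ℕ) (hse : s ≤ e)
    (h : ∀ t, s ≤ t → t < e → ∀ β n' m, U (runP U x t) = some (β, n', m) →
      γ < β ∨ (γ = β ∧ n' ≠ n)) :
    runP U x e γ n = runP U x s γ n := by
  induction e, hse using Nat.le_induction with
  | base => rfl
  | succ e hse ih =>
      rw [runP_step_eq x e γ n (fun β n' m hu => h e hse (Nat.lt_succ_self e) β n' m hu)]
      exact ih (fun t h1 h2 => h t h1 (by omega))

lemma runP_frozen (x : OSeq) (θ : Ordinal)
    (hlev : ∀ t β n m, U (runP U x t) = some (β, n, m) → θ ≤ β)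
    (γ : Ordinal) (hγ : γ < θ) (n t : ℕ) : runP U x t γ n = x γ n := by
  have := runP_const (U := U) x γ n 0 t (Nat.zero_le t)
    (fun t' _ _ β n' m hu => Or.inl (lt_of_lt_of_le hγ (hlev t' β n' m hu)))
  exact this

lemma runP_persist (x : OSeq) (γ : Ordinal) (n m : ℕ) (s e : ℕ) (hse : s < e)
    (hs : U (runP U x s) = some (γ, n, m))
    (h : ∀ t, s < t → t < e → ∀ β n' m', U (runP U x t) = some (β, n', m') →
      γ < β ∨ (γ = β ∧ n' ≠ n)) :
    runP U x e γ n = m := by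
  have h1 : runP U x (s + 1) γ n = m := by
    rw [runP_succ, hs, oplus_val, if_neg (lt_irrefl _), if_pos rfl, if_pos rfl]
  have h2 := runP_const (U := U) x γ n (s + 1) e hse
    (fun t ht1 ht2 β n' m' hu => h t (by omega) ht2 β n' m' hu)
  rw [h2, h1]

lemma runP_fresh (hU : IsUpdateProc α U) (x : OSeq) (N : ℕ) (γ : Ordinal)
    (hN : ∀ t, N ≤ t → ∀ β n' m', U (runP U x t) = some (β, n', m') → γ ≤ β)
    (s₁ s₂ : ℕ) (n m₁ m₂ : ℕ) (h1 : N ≤ s₁) (hlt : s₁ < s₂)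
    (e1 : U (runP U x s₁) = some (γ, n, m₁)) (e2 : U (runP U x s₂) = some (γ, n, m₂)) :
    False := by
  have hex : ∃ k, s₁ < k ∧ ∃ m', U (runP U x k) = some (γ, n, m') := ⟨s₂, hlt, m₂, e2⟩
  obtain ⟨hs1, m', e'⟩ := Nat.find_spec hex
  set s := Nat.find hex with hsdef
  have hmin : ∀ t, s₁ < t → t < s → ¬∃ m'', U (runP U x t) = some (γ, n, m'') :=
    fun t ht1 ht2 hh => Nat.find_min hex ht2 ⟨ht1, hh⟩
  have hpers : runP U x s γ n = m₁ := by
    refine runP_persist (U := U) x γ n m₁ s₁ s hs1 e1 ?_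
    intro t ht1 ht2 β n' m'' hu
    have hγβ : γ ≤ β := hN t (by omega) β n' m'' hu
    rcases lt_or_eq_of_le hγβ with h | h
    · exact Or.inl h
    · refine Or.inr ⟨h, fun hn => hmin t ht1 ht2 ⟨m'', by rw [hu, ← h, hn]⟩⟩
  have hagree : ∀ γ' : Ordinal, γ' < γ → runP U x s₁ γ' = runP U x s γ' := by
    intro γ' hγ'
    funext n''
    refine (runP_const (U := U) x γ' n'' s₁ s hs1.le ?_).symm
    intro t ht1 ht2 β n' m'' hu
    exact Or.inl (lt_of_lt_of_le hγ' (hN t (by omega) β n' m'' hu))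
  exact hU.2.2 (runP U x s₁) (runP U x s) γ n m₁ n m' hagree e1 hpers e' rfl

lemma nat_finite_bound {S : Set ℕ} (h : S.Finite) : ∃ N, ∀ t, N ≤ t → t ∉ S := by
  rcases h.bddAbove with ⟨b, hb⟩
  exact ⟨b + 1, fun t ht hts => by have := hb hts; omega⟩

lemma nat_infinite_of_unbounded {S : Set ℕ} (h : ∀ M, ∃ t, M ≤ t ∧ t ∈ S) : S.Infinite := by
  intro hf
  obtain ⟨N, hN⟩ := nat_finite_bound hf
  obtain ⟨t, ht, hts⟩ := h N
  exact hN t ht hts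

lemma nat_infinite_exists_ge {S : Set ℕ} (h : S.Infinite) (M : ℕ) : ∃ t, M ≤ t ∧ t ∈ S := by
  by_contra hc
  push_neg at hc
  refine h (Set.Finite.subset (Set.finite_Iio M) ?_)
  intro t hts
  by_contra hlt
  exact hc t (by simpa using hlt) hts


lemma jump (hU : IsUpdateProc α U) (θ : Ordinal) (x : OSeq)
    (hinf : ∀ t, U (runP U x t) ≠ none)
    (hlev : ∀ t β n m, U (runP U x t) = some (β, n, m) → θ ≤ β) :
    ∃ δ y, θ < δ ∧ δ ≤ α ∧ (∀ t, U (runP U y t) ≠ none) ∧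
      (∀ t β n m, U (runP U y t) = some (β, n, m) → δ ≤ β) ∧
      (∀ γ n, δ ≤ γ → y γ n = 0) ∧ (∀ γ, γ < θ → ∀ n, y γ n = x γ n) := by
  classical
  set low : Ordinal → Set ℕ :=
    fun d => {t | ∃ β n m, U (runP U x t) = some (β, n, m) ∧ β < d} with hlowdef
  have hαS : (low α).Infinite := by
    have huniv : low α = Set.univ := by
      apply Set.eq_univ_of_forall
      intro t
      rcases hx : U (runP U x t) with _ | ⟨β, n, m⟩
      · exact absurd hx (hinf t)
      · exact ⟨β, n, m, hx, hU.2.1 _ β n m hx⟩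
    rw [huniv]
    exact Set.infinite_univ
  set S : Set Ordinal := {d | (low d).Infinite} with hSdef
  have hSne : S.Nonempty := ⟨α, hαS⟩
  set δ : Ordinal := Ordinal.lt_wf.min S hSne with hδdef
  have hδS : (low δ).Infinite := Ordinal.lt_wf.min_mem S hSne
  have hminS : ∀ d, d < δ → (low d).Finite := by
    intro d hd
    rw [← Set.not_infinite]
    intro hdi
    exact Ordinal.lt_wf.not_lt_min S hdi hd
  have hδα : δ ≤ α := not_lt.1 fun h => Ordinal.lt_wf.not_lt_min S hαS h
  have hθδ : θ < δ := by
    obtain ⟨t, ht⟩ := hδS.nonempty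
    obtain ⟨β, n, m, hu, hβ⟩ := ht
    exact lt_of_le_of_lt (hlev t β n m hu) hβ
  -- stabilization of every coordinate below δ
  have stab : ∀ γ, γ < δ → ∀ n, ∃ v T, ∀ t, T ≤ t → runP U x t γ n = v := by
    intro γ hγ n
    rcases lt_or_eq_of_le (Order.succ_le_of_lt hγ) with h1 | h1
    · obtain ⟨N, hN⟩ := nat_finite_bound (hminS _ h1)
      refine ⟨runP U x N γ n, N, fun t ht => ?_⟩
      refine runP_const (U := U) x γ n N t ht ?_
      intro t' h1' h2' β n' m hu
      left
      by_contra hb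
      exact hN t' h1' ⟨β, n', m, hu, Order.lt_succ_iff.mpr (not_lt.1 hb)⟩
    · obtain ⟨N, hN⟩ := nat_finite_bound (hminS γ hγ)
      have hNlev : ∀ t, N ≤ t → ∀ β n' m', U (runP U x t) = some (β, n', m') → γ ≤ β := by
        intro t ht β n' m' hu
        by_contra hb
        exact hN t ht ⟨β, n', m', hu, not_le.1 hb⟩
      by_cases hhit : ∃ s, N ≤ s ∧ ∃ m', U (runP U x s) = some (γ, n, m')
      · obtain ⟨s, hsN, m', hs⟩ := hhit
        refine ⟨m', s + 1, fun t ht => ?_⟩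
        refine runP_persist (U := U) x γ n m' s t (by omega) hs ?_
        intro t' h1' h2' β n' m'' hu
        have hγβ := hNlev t' (by omega) β n' m'' hu
        rcases lt_or_eq_of_le hγβ with h | h
        · exact Or.inl h
        · refine Or.inr ⟨h, fun hn => ?_⟩
          exact runP_fresh hU x N γ hNlev s t' n m' m'' hsN h1' hs (by rw [hu, ← h, hn])
      · refine ⟨runP U x N γ n, N, fun t ht => ?_⟩
        refine runP_const (U := U) x γ n N t ht ?_
        intro t' h1' h2' β n' m hu
        have hγβ := hNlev t' h1' β n' m hu
        rcases lt_or_eq_of_le hγβ with h | h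
        · exact Or.inl h
        · exact Or.inr ⟨h, fun hn => hhit ⟨t', h1', m, by rw [hu, ← h, hn]⟩⟩
  -- the limit sequence g
  have hg : ∃ g : OSeq, (∀ γ (hγ : γ < δ) n, ∃ T, ∀ t, T ≤ t → runP U x t γ n = g γ n) ∧
      (∀ γ n, δ ≤ γ → g γ n = 0) := by
    refine ⟨fun γ n => if hγ : γ < δ then (stab γ hγ n).choose else 0, ?_, ?_⟩
    · intro γ hγ n
      simp only [dif_pos hγ]
      exact (stab γ hγ n).choose_spec
    · intro γ n hγ
      simp only [dif_neg (not_lt.2 hγ)]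
  obtain ⟨g, gspec, gzero⟩ := hg
  -- realization of the ghost run inside the real run
  have creal : ∀ j : ℕ,
      (∀ i, i < j → ∃ β n m, U (runP U g i) = some (β, n, m) ∧ δ ≤ β) →
      ∀ A : Finset (Ordinal × ℕ), ∀ M : ℕ, ∃ t, M ≤ t ∧ t ∈ low δ ∧
        ∀ p ∈ A, runP U x (t + 1 + j) p.1 p.2 = runP U g j p.1 p.2 := by
    intro j
    induction j with
    | zero =>
        intro _ A M
        have hT : ∃ T : ℕ, ∀ p ∈ A, p.1 < δ → ∀ t, T ≤ t →
            runP U x t p.1 p.2 = g p.1 p.2 := by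
          classical
          induction A using Finset.induction_on with
          | empty => exact ⟨0, by simp⟩
          | @insert a A' ha ih =>
              obtain ⟨T, hT⟩ := ih
              by_cases haδ : a.1 < δ
              · obtain ⟨Ta, hTa⟩ := gspec a.1 haδ a.2
                refine ⟨max T Ta, ?_⟩
                intro p hp hpδ t ht
                rcases Finset.mem_insert.1 hp with rfl | hp
                · exact hTa t (le_trans (le_max_right _ _) ht)
                · exact hT p hp hpδ t (le_trans (le_max_left _ _) ht)
              · refine ⟨T, ?_⟩
                intro p hp hpδ t ht
                rcases Finset.mem_insert.1 hp with rfl | hp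
                · exact absurd hpδ haδ
                · exact hT p hp hpδ t ht
        obtain ⟨T, hT⟩ := hT
        obtain ⟨t, ht, htlow⟩ := nat_infinite_exists_ge hδS (max M T)
        obtain ⟨β, nn, mm, hu, hβ⟩ := htlow
        refine ⟨t, le_trans (le_max_left _ _) ht, ⟨β, nn, mm, hu, hβ⟩, ?_⟩
        intro p hp
        simp only [Nat.add_zero]
        show runP U x (t + 1) p.1 p.2 = g p.1 p.2
        by_cases hpδ : p.1 < δ
        · exact hT p hp hpδ (t + 1) (by
            have := le_trans (le_max_right M T) ht
            omega)
        · have hβp : β < p.1 := hβ.trans_le (not_lt.1 hpδ)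
          rw [runP_succ, hu, oplus_val, if_neg (asymm hβp), if_neg (ne_of_gt hβp),
            gzero p.1 p.2 (not_lt.1 hpδ)]
    | succ j ih =>
        intro hyp A M
        have hyp' : ∀ i, i < j → ∃ β n m, U (runP U g i) = some (β, n, m) ∧ δ ≤ β :=
          fun i hi => hyp i (by omega)
        obtain ⟨βj, nj, mj, huj, hβj⟩ := hyp j (by omega)
        obtain ⟨Aj, _, hAj⟩ := hU.1 (runP U g j)
        obtain ⟨t, htM, htlow, hagree⟩ := ih hyp' (A ∪ Aj) M
        refine ⟨t, htM, htlow, ?_⟩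
        have hUeq : U (runP U x (t + 1 + j)) = U (runP U g j) :=
          hAj _ (fun p hp => hagree p (Finset.mem_union_right _ hp))
        intro p hp
        have hidx : t + 1 + (j + 1) = (t + 1 + j) + 1 := rfl
        rw [hidx, runP_succ, hUeq, huj, runP_succ (U := U) g j, huj]
        exact oplus_congr_at _ _ _ _ _ (hagree p (Finset.mem_union_left _ hp))
  -- the ghost run is infinite with all levels ≥ δ
  have ghost : ∀ j : ℕ, ∃ β n m, U (runP U g j) = some (β, n, m) ∧ δ ≤ β := by
    intro j
    induction j using Nat.strong_induction_on with
    | _ j ih =>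
      obtain ⟨Aj, _, hAj⟩ := hU.1 (runP U g j)
      have real : ∀ M : ℕ, ∃ t, M ≤ t ∧ U (runP U x (t + 1 + j)) = U (runP U g j) := by
        intro M
        obtain ⟨t, htM, _, hag⟩ := creal j ih Aj M
        exact ⟨t, htM, hAj _ (fun p hp => hag p hp)⟩
      obtain ⟨t0, _, h0⟩ := real 0
      rcases hgj : U (runP U g j) with _ | ⟨β, n, m⟩
      · exact absurd (h0.trans hgj) (hinf _)
      · refine ⟨β, n, m, rfl, ?_⟩
        by_contra hβδ
        have hβδ' : β < δ := not_le.1 hβδ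
        rcases lt_or_eq_of_le (Order.succ_le_of_lt hβδ') with h1 | h1
        · refine nat_infinite_of_unbounded (S := low (Order.succ β)) ?_ (hminS _ h1)
          intro M
          obtain ⟨t, htM, hteq⟩ := real M
          exact ⟨t + 1 + j, by omega, β, n, m, hteq.trans hgj, Order.lt_succ β⟩
        · obtain ⟨N, hN⟩ := nat_finite_bound (hminS β hβδ')
          have hNlev : ∀ t, N ≤ t → ∀ β' n' m', U (runP U x t) = some (β', n', m') → β ≤ β' := by
            intro t ht β' n' m' hu
            by_contra hb
            exact hN t ht ⟨β', n', m', hu, not_le.1 hb⟩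
          obtain ⟨t₁, ht₁, e₁⟩ := real N
          obtain ⟨t₂, ht₂, e₂⟩ := real (t₁ + 1)
          exact runP_fresh hU x N β hNlev (t₁ + 1 + j) (t₂ + 1 + j) n m m (by omega)
            (by omega) (e₁.trans hgj) (e₂.trans hgj)
  refine ⟨δ, g, hθδ, hδα, ?_, ?_, ?_, ?_⟩
  · intro t h
    obtain ⟨β, n, m, hu, _⟩ := ghost t
    rw [hu] at h
    exact Option.some_ne_none _ h
  · intro t β n m hu
    obtain ⟨β', n', m', hu', hβ'⟩ := ghost t
    have := Option.some.inj (hu.symm.trans hu')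
    have hb : β = β' := congrArg Prod.fst this
    exact hb ▸ hβ'
  · exact fun γ n hγ => gzero γ n hγ
  · intro γ hγ n
    obtain ⟨T, hT⟩ := gspec γ (hγ.trans hθδ) n
    have h1 := hT T le_rfl
    have h2 := runP_frozen (U := U) x θ hlev γ hγ n T
    rw [← h1, h2]


def JumpTo (U : OSeq → Option (Ordinal × ℕ × ℕ)) (α : Ordinal)
    (p q : Ordinal × OSeq) : Prop :=
  p.1 < q.1 ∧ q.1 ≤ α ∧ (∀ t, U (runP U q.2 t) ≠ none) ∧
  (∀ t β n m, U (runP U q.2 t) = some (β, n, m) → q.1 ≤ β) ∧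
  (∀ γ n, q.1 ≤ γ → q.2 γ n = 0) ∧ (∀ γ, γ < p.1 → ∀ n, q.2 γ n = p.2 γ n)

noncomputable def step (U : OSeq → Option (Ordinal × ℕ × ℕ)) (α : Ordinal)
    (p : Ordinal × OSeq) : Ordinal × OSeq :=
  if h : ∃ q, JumpTo U α p q then h.choose else p

lemma step_spec {p : Ordinal × OSeq} (h : ∃ q, JumpTo U α p q) :
    JumpTo U α p (step U α p) := by
  rw [step, dif_pos h]
  exact h.choose_spec

noncomputable def tower (U : OSeq.{u} → Option (Ordinal.{u} × ℕ × ℕ)) (α : Ordinal.{u}) :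
    Ordinal.{u} → Ordinal.{u} × OSeq.{u} := fun ι =>
  Ordinal.limitRecOn ι ((0 : Ordinal), (fun _ _ => 0 : OSeq))
    (fun _ ih => step U α ih)
    (fun o _ ih =>
      (⨆ κ : Set.Iio o, (ih κ.1 κ.2).1,
       fun γ n => if h : ∃ κ : Set.Iio o, γ < (ih κ.1 κ.2).1
         then (ih h.choose.1 h.choose.2).2 γ n else 0))

lemma tower_zero : tower U α 0 = ((0 : Ordinal), (fun _ _ => 0 : OSeq)) :=
  Ordinal.limitRecOn_zero _ _ _

lemma tower_succ (ι : Ordinal) :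
    tower U α (Order.succ ι) = step U α (tower U α ι) :=
  Ordinal.limitRecOn_succ _ _ _ _

lemma tower_limit (ι : Ordinal) (h : Order.IsSuccLimit ι) :
    tower U α ι =
      (⨆ κ : Set.Iio ι, (tower U α κ.1).1,
       fun γ n => if hh : ∃ κ : Set.Iio ι, γ < (tower U α κ.1).1
         then (tower U α hh.choose.1).2 γ n else 0) :=
  Ordinal.limitRecOn_limit _ _ _ _ h

def INV (U : OSeq.{u} → Option (Ordinal.{u} × ℕ × ℕ)) (α : Ordinal.{u}) (ι : Ordinal.{u}) : Prop :=
  (∀ t, U (runP U (tower U α ι).2 t) ≠ none) ∧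
  (∀ t β n m, U (runP U (tower U α ι).2 t) = some (β, n, m) → (tower U α ι).1 ≤ β) ∧
  (∀ γ n, (tower U α ι).1 ≤ γ → (tower U α ι).2 γ n = 0) ∧
  ((tower U α ι).1 ≤ α) ∧
  (∀ κ, κ < ι → (tower U α κ).1 < (tower U α ι).1 ∧
    ∀ γ, γ < (tower U α κ).1 → ∀ n, (tower U α ι).2 γ n = (tower U α κ).2 γ n)


lemma main_inv (hU : IsUpdateProc α U) (hF : ∀ t, U (learnProc U t) ≠ none) :
    ∀ ι : Ordinal.{u}, INV U α ι := by
  intro ι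
  induction ι using Ordinal.induction with
  | _ ι ih =>
  rcases Ordinal.zero_or_succ_or_isSuccLimit ι with rfl | ⟨κ, rfl⟩ | hlim
  · refine ⟨?_, ?_, ?_, ?_, ?_⟩ <;> rw [tower_zero]
    · intro t h
      rw [← learnProc_eq_runP U t] at h
      exact hF t h
    · exact fun t β n m _ => zero_le (a := β)
    · exact fun γ n _ => rfl
    · exact zero_le (a := α)
    · exact fun κ hκ => absurd hκ (not_lt_of_ge (zero_le (a := κ)))
  · have hκ := ih κ (Order.lt_succ κ)
    obtain ⟨hinf, hlev, hzero, hlea, hpair⟩ := hκ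
    have hq : ∃ q, JumpTo U α (tower U α κ) q := by
      obtain ⟨δ, y, h1, h2, h3, h4, h5, h6⟩ := jump hU (tower U α κ).1 (tower U α κ).2 hinf hlev
      exact ⟨(δ, y), h1, h2, h3, h4, h5, h6⟩
    have hs := step_spec hq
    have hts := tower_succ (U := U) (α := α) κ
    refine ⟨?_, ?_, ?_, ?_, ?_⟩ <;> rw [hts]
    · exact hs.2.2.1
    · exact hs.2.2.2.1
    · exact hs.2.2.2.2.1
    · exact hs.2.1
    · intro κ' hκ'
      rcases lt_or_eq_of_le (Order.lt_succ_iff.1 hκ') with hlt | heq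
      · have hp := hpair κ' hlt
        refine ⟨lt_trans hp.1 hs.1, ?_⟩
        intro γ hγ n
        rw [hs.2.2.2.2.2 γ (hγ.trans hp.1) n, hp.2 γ hγ n]
      · subst heq
        exact ⟨hs.1, fun γ hγ n => hs.2.2.2.2.2 γ hγ n⟩
  · -- limit case
    have htl := tower_limit (U := U) (α := α) ι hlim
    have hδs1 : (tower U α ι).1 = ⨆ κ : Set.Iio ι, (tower U α κ.1).1 := by rw [htl]
    have hxs1 : (tower U α ι).2 = fun γ n =>
        if hh : ∃ κ : Set.Iio ι, γ < (tower U α κ.1).1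
          then (tower U α hh.choose.1).2 γ n else 0 := by rw [htl]
    have hmono' : ∀ κ₁ κ₂, κ₁ ≤ κ₂ → κ₂ < ι →
        (tower U α κ₁).1 ≤ (tower U α κ₂).1 := by
      intro κ₁ κ₂ h12 h2
      rcases lt_or_eq_of_le h12 with h | h
      · exact ((ih κ₂ h2).2.2.2.2 κ₁ h).1.le
      · rw [h]
    have hΛle : ∀ κ, κ < ι → (tower U α κ).1 ≤ (tower U α ι).1 := by
      intro κ hκ
      rw [hδs1]
      exact Ordinal.le_iSup (fun κ : Set.Iio ι => (tower U α κ.1).1) ⟨κ, hκ⟩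
    have hΛlt : ∀ κ, κ < ι → (tower U α κ).1 < (tower U α ι).1 := by
      intro κ hκ
      have hsucc : Order.succ κ < ι := hlim.succ_lt hκ
      have h1 : (tower U α κ).1 < (tower U α (Order.succ κ)).1 :=
        ((ih _ hsucc).2.2.2.2 κ (Order.lt_succ κ)).1
      exact lt_of_lt_of_le h1 (hΛle _ hsucc)
    have hΛsup : ∀ γ, γ < (tower U α ι).1 → ∃ κ, κ < ι ∧ γ < (tower U α κ).1 := by
      intro γ hγ
      by_contra h
      push_neg at h
      have : (tower U α ι).1 ≤ γ := by
        rw [hδs1]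
        exact Ordinal.iSup_le (fun κ => h κ.1 κ.2)
      exact absurd hγ (not_lt.2 this)
    have hΛα : (tower U α ι).1 ≤ α := by
      rw [hδs1]
      exact Ordinal.iSup_le (fun κ => (ih κ.1 κ.2).2.2.2.1)
    have hxlam : ∀ κ, κ < ι → ∀ γ, γ < (tower U α κ).1 → ∀ n,
        (tower U α ι).2 γ n = (tower U α κ).2 γ n := by
      intro κ hκ γ hγ n
      have hex : ∃ κ' : Set.Iio ι, γ < (tower U α κ'.1).1 := ⟨⟨κ, hκ⟩, hγ⟩
      rw [hxs1]
      simp only [dif_pos hex]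
      have hsp := hex.choose_spec
      rcases le_total hex.choose.1 κ with h | h
      · rcases lt_or_eq_of_le h with hh | hh
        · exact (((ih κ hκ).2.2.2.2 _ hh).2 γ hsp n).symm
        · rw [hh]
      · rcases lt_or_eq_of_le h with hh | hh
        · exact ((ih hex.choose.1 hex.choose.2).2.2.2.2 κ hh).2 γ hγ n
        · rw [← hh]
    have hxlam0 : ∀ γ n, (tower U α ι).1 ≤ γ → (tower U α ι).2 γ n = 0 := by
      intro γ n hγ
      rw [hxs1]
      have hnex : ¬ ∃ κ' : Set.Iio ι, γ < (tower U α κ'.1).1 := by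
        rintro ⟨κ', hκ'⟩
        exact absurd (lt_of_lt_of_le hκ' (hΛle κ'.1 κ'.2)) (not_lt.2 hγ)
      simp only [dif_neg hnex]
    have hfind : ∀ A : Finset (Ordinal × ℕ), ∃ κ₀, κ₀ < ι ∧
        ∀ p ∈ A, p.1 < (tower U α ι).1 → p.1 < (tower U α κ₀).1 := by
      intro A
      classical
      induction A using Finset.induction_on with
      | empty => exact ⟨0, hlim.pos, by simp⟩
      | @insert a A' ha ihA =>
          obtain ⟨κ₀, hκ₀, h₀⟩ := ihA
          by_cases haΛ : a.1 < (tower U α ι).1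
          · obtain ⟨κ₁, hκ₁, h₁⟩ := hΛsup a.1 haΛ
            refine ⟨max κ₀ κ₁, max_lt hκ₀ hκ₁, ?_⟩
            intro p hp hpΛ
            rcases Finset.mem_insert.1 hp with rfl | hp
            · exact lt_of_lt_of_le h₁ (hmono' κ₁ _ (le_max_right _ _) (max_lt hκ₀ hκ₁))
            · exact lt_of_lt_of_le (h₀ p hp hpΛ) (hmono' κ₀ _ (le_max_left _ _) (max_lt hκ₀ hκ₁))
          · refine ⟨κ₀, hκ₀, ?_⟩
            intro p hp hpΛ
            rcases Finset.mem_insert.1 hp with rfl | hp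
            · exact absurd hpΛ haΛ
            · exact h₀ p hp hpΛ
    have key : ∀ j : ℕ, ∃ κ₀, κ₀ < ι ∧ ∀ κ, κ₀ ≤ κ → κ < ι → ∀ i, i ≤ j →
        (U (runP U (tower U α ι).2 i) = U (runP U (tower U α κ).2 i) ∧
         ∀ γ n, (γ < (tower U α κ).1 ∨ (tower U α ι).1 ≤ γ) →
           runP U (tower U α ι).2 i γ n = runP U (tower U α κ).2 i γ n) := by
      intro j
      induction j with
      | zero =>
          obtain ⟨A₀, _, hA₀⟩ := hU.1 (runP U (tower U α ι).2 0)
          obtain ⟨κ₀, hκ₀, h₀⟩ := hfind A₀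
          refine ⟨κ₀, hκ₀, fun κ hκκ₀ hκι => ?_⟩
          have hag : ∀ γ n, (γ < (tower U α κ).1 ∨ (tower U α ι).1 ≤ γ) →
              (tower U α ι).2 γ n = (tower U α κ).2 γ n := by
            intro γ n h
            rcases h with h | h
            · exact hxlam κ hκι γ h n
            · rw [hxlam0 γ n h]
              exact ((ih κ hκι).2.2.1 γ n (le_trans (hΛle κ hκι) h)).symm
          have hUeq : U (runP U (tower U α ι).2 0) = U (runP U (tower U α κ).2 0) := by
            refine (hA₀ (tower U α κ).2 ?_).symm
            intro p hp
            by_cases hpΛ : p.1 < (tower U α ι).1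
            · exact (hag p.1 p.2 (Or.inl (lt_of_lt_of_le (h₀ p hp hpΛ)
                (hmono' κ₀ κ hκκ₀ hκι)))).symm
            · exact (hag p.1 p.2 (Or.inr (not_lt.1 hpΛ))).symm
          intro i hi
          have hi0 : i = 0 := Nat.le_zero.1 hi
          subst hi0
          exact ⟨hUeq, hag⟩
      | succ j ihj =>
          obtain ⟨κ₀, hκ₀, h₀⟩ := ihj
          obtain ⟨A₁, _, hA₁⟩ := hU.1 (runP U (tower U α ι).2 (j + 1))
          obtain ⟨κ₁, hκ₁, h₁⟩ := hfind A₁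
          refine ⟨max κ₀ κ₁, max_lt hκ₀ hκ₁, fun κ hκmax hκι => ?_⟩
          have hprev := h₀ κ (le_trans (le_max_left _ _) hκmax) hκι
          have hagsucc : ∀ γ n, (γ < (tower U α κ).1 ∨ (tower U α ι).1 ≤ γ) →
              runP U (tower U α ι).2 (j + 1) γ n = runP U (tower U α κ).2 (j + 1) γ n := by
            intro γ n hγ
            have hUj := (hprev j le_rfl).1
            rw [runP_succ, runP_succ, ← hUj]
            exact oplus_congr_at _ _ _ _ _ ((hprev j le_rfl).2 γ n hγ)
          have hUsucc : U (runP U (tower U α ι).2 (j + 1)) =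
              U (runP U (tower U α κ).2 (j + 1)) := by
            refine (hA₁ _ ?_).symm
            intro p hp
            by_cases hpΛ : p.1 < (tower U α ι).1
            · exact (hagsucc p.1 p.2 (Or.inl (lt_of_lt_of_le (h₁ p hp hpΛ)
                (hmono' κ₁ κ (le_trans (le_max_right _ _) hκmax) hκι)))).symm
            · exact (hagsucc p.1 p.2 (Or.inr (not_lt.1 hpΛ))).symm
          intro i hi
          rcases Nat.lt_succ_iff_lt_or_eq.1 (Nat.lt_succ_of_le hi) with hlt | heq
          · exact hprev i (Nat.lt_succ_iff.1 (Nat.succ_le_of_lt hlt))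
          · subst heq
            exact ⟨hUsucc, hagsucc⟩
    refine ⟨?_, ?_, hxlam0, hΛα, fun κ hκ => ⟨hΛlt κ hκ, hxlam κ hκ⟩⟩
    · intro t h
      obtain ⟨κ₀, hκ₀, hk⟩ := key t
      have h1 := (hk κ₀ le_rfl hκ₀ t le_rfl).1
      rw [h1] at h
      exact (ih κ₀ hκ₀).1 t h
    · intro t β n m hu
      obtain ⟨κ₀, hκ₀, hk⟩ := key t
      rw [hδs1]
      refine Ordinal.iSup_le ?_
      rintro ⟨κ, hκ⟩
      have hκ' : max κ κ₀ < ι := max_lt hκ hκ₀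
      have h1 := (hk (max κ κ₀) (le_max_right _ _) hκ' t le_rfl).1
      have hu' : U (runP U (tower U α (max κ κ₀)).2 t) = some (β, n, m) := by
        rw [← h1]
        exact hu
      have h2 := (ih _ hκ').2.1 t β n m hu'
      exact le_trans (hmono' κ (max κ κ₀) (le_max_left _ _) hκ') h2

lemma tower_ge (hU : IsUpdateProc α U) (hF : ∀ t, U (learnProc U t) ≠ none) :
    ∀ ι : Ordinal.{u}, ι ≤ (tower U α ι).1 := by
  intro ι
  induction ι using Ordinal.induction with
  | _ ι ih =>
  by_contra h
  push_neg at h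
  have h2 := ih _ h
  have h3 := ((main_inv hU hF ι).2.2.2.2 (tower U α ι).1 h).1
  exact absurd (lt_of_le_of_lt h2 h3) (lt_irrefl _)

lemma main_terminate (hU : IsUpdateProc α U) : ∃ k, U (learnProc U k) = none := by
  by_contra hF
  push_neg at hF
  have h1 := tower_ge hU hF (Order.succ α)
  have h2 := (main_inv hU hF (Order.succ α)).2.2.2.1
  exact absurd (lt_of_lt_of_le (Order.lt_succ α) (le_trans h1 h2)) (lt_irrefl _)

lemma ofin (U : OSeq → Option (Ordinal × ℕ × ℕ)) (α : Ordinal) :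
    ∀ k, OFinite α (learnProc U k) := by
  intro k
  induction k with
  | zero =>
      have : {p : Ordinal × ℕ | p.1 < α ∧ learnProc U 0 p.1 p.2 ≠ 0} = ∅ := by
        ext p
        simp [learnProc]
      rw [OFinite, this]
      exact Set.finite_empty
  | succ k ihk =>
      have hk1 : learnProc U (k + 1) = oplus (learnProc U k) (U (learnProc U k)) := rfl
      rcases hu : U (learnProc U k) with _ | ⟨γ, n, m⟩
      · have : learnProc U (k + 1) = learnProc U k := by rw [hk1, hu]; rfl
        rw [OFinite, this]
        exact ihk
      · refine Set.Finite.subset (ihk.union (Set.finite_singleton (γ, n))) ?_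
        intro p hp
        obtain ⟨hpα, hpne⟩ := hp
        have hval : learnProc U (k + 1) p.1 p.2 = oplus (learnProc U k) (some (γ, n, m)) p.1 p.2 := by
          rw [hk1, hu]
        rw [hval, oplus_val] at hpne
        split_ifs at hpne with h1 h2 h3
        · exact Or.inl ⟨hpα, hpne⟩
        · exact Or.inr (by simp only [Set.mem_singleton_iff]; exact Prod.ext h2 h3)
        · exact Or.inl ⟨hpα, hpne⟩
        · exact absurd rfl hpne

end LPTerm

/-- Termination of Learning Processes: for any update procedure `U` of countable
ordinal `α ≥ 1`, the learning process generated by `U` terminates, i.e. there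
is `k` with `U(U^(k)) = ∅`; in particular `U^(k)` is a finite zero of `U`. -/
theorem termination_of_learning_processes (α : Ordinal)
    (hα : 1 ≤ α) (hcount : α.card ≤ Cardinal.aleph0)
    (U : OSeq → Option (Ordinal × ℕ × ℕ)) (hU : IsUpdateProc α U) :
    ∃ k : ℕ, U (learnProc U k) = none ∧ OFinite α (learnProc U k) := by
  obtain ⟨k, hk⟩ := LPTerm.main_terminate hU
  exact ⟨k, hk, LPTerm.ofin U α k⟩
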